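/- Let r ≥ 2 and n ≥ 2. In S_{2rn}, for 1 ≤ j ≤ n let A_j be the 2r-cycle (2r(j-1)+1, …, 2rj), let π = A_1⋯A_n, and let 𝔸_j = {2r(j-1)+1, …, 2rj} be the support of A_j. Every element x of the centralizer of π in S_{2rn} permutes the sets 𝔸_1,…,𝔸_n; let τ_x ∈ S_n denote the induced permutation determined by x(𝔸_j) = 𝔸_{τ_x(j)}. Let g ∈ S_{2rn} be such that g π g⁻¹ commutes with π. Then both g π g⁻¹ and g⁻¹ π g lie in the centralizer of π, and the permutations τ_{g π g⁻¹} and τ_{g⁻¹ π g} have the same cycle type (equivalently, they are conjugate in S_n). -/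

import Mathlib

open Equiv Equiv.Perm Finset

section CycleTypeFix

variable {β : Type*} [Fintype β] [DecidableEq β]

private def per (σ : Perm β) (x : β) : ℕ :=
  if σ x = x then 1 else (σ.cycleOf x).support.card

private lemma mem_supp_cycleOf {σ : Perm β} {x : β} (h : σ x ≠ x) :
    x ∈ (σ.cycleOf x).support :=
  mem_support_cycleOf_iff.2 ⟨Equiv.Perm.SameCycle.refl _ _, mem_support.2 h⟩

private lemma per_pos (σ : Perm β) (x : β) : 0 < per σ x := by
  unfold per
  split
  · norm_num
  · next h => exact Finset.card_pos.2 ⟨x, mem_supp_cycleOf h⟩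

private lemma pow_fix_iff (σ : Perm β) (x : β) (k : ℕ) :
    (σ ^ k) x = x ↔ per σ x ∣ k := by
  unfold per
  split
  · next h => simp [pow_apply_eq_self_of_apply_eq_self h]
  · next h => exact (isCycleOn_support_cycleOf σ x).pow_apply_eq (mem_supp_cycleOf h)

private def fixCnt (σ : Perm β) (k : ℕ) : ℕ :=
  (univ.filter fun x => (σ ^ k) x = x).card

private def perCnt (σ : Perm β) (d : ℕ) : ℕ :=
  (univ.filter fun x => per σ x = d).card

private lemma fixCnt_eq_card (σ : Perm β) (k : ℕ)
    (i : DecidablePred fun x => (σ ^ k) x = x) :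
    fixCnt σ k = (@Finset.filter _ (fun x => (σ ^ k) x = x) i univ).card := by
  unfold fixCnt
  congr 1
  ext x
  simp

private lemma fixCnt_eq_sum (σ : Perm β) (k : ℕ) (hk : k ≠ 0) :
    fixCnt σ k = ∑ d ∈ k.divisors, perCnt σ d := by
  have h1 : fixCnt σ k = (univ.filter fun x => per σ x ∣ k).card := by
    unfold fixCnt
    congr 1
    exact Finset.filter_congr fun x _ => by rw [pow_fix_iff]
  rw [h1]
  rw [Finset.card_eq_sum_card_fiberwise (f := per σ) (t := k.divisors)
    (fun x hx => Nat.mem_divisors.2 ⟨(Finset.mem_filter.1 hx).2, hk⟩)]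
  refine Finset.sum_congr rfl fun d hd => ?_
  unfold perCnt
  congr 1
  ext x
  simp only [Finset.mem_filter, Finset.mem_univ, true_and]
  constructor
  · rintro ⟨-, h⟩; exact h
  · rintro h; exact ⟨h ▸ (Nat.mem_divisors.1 hd).1, h⟩

private lemma perCnt_eq_of_fixCnt {σ σ' : Perm β}
    (h : ∀ k, fixCnt σ k = fixCnt σ' k) : ∀ d, perCnt σ d = perCnt σ' d := by
  intro d
  induction d using Nat.strong_induction_on with
  | _ d ih =>
    rcases Nat.eq_zero_or_pos d with rfl | hd
    · have h0 : ∀ ρ : Perm β, perCnt ρ 0 = 0 := fun ρ => by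
        unfold perCnt
        rw [Finset.card_eq_zero]
        ext x
        simp only [Finset.mem_filter, Finset.mem_univ, true_and, Finset.notMem_empty,
          iff_false]
        exact (per_pos ρ x).ne'
      rw [h0, h0]
    · have h3 : ∑ i ∈ d.properDivisors, perCnt σ i + perCnt σ d
          = ∑ i ∈ d.properDivisors, perCnt σ' i + perCnt σ' d := by
        have hins := Nat.cons_self_properDivisors hd.ne'
        have e1 := fixCnt_eq_sum σ d hd.ne'
        have e2 := fixCnt_eq_sum σ' d hd.ne'
        rw [← hins, Finset.sum_cons] at e1 e2
        have := h d
        omega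
      have h4 : ∑ i ∈ d.properDivisors, perCnt σ i
          = ∑ i ∈ d.properDivisors, perCnt σ' i :=
        Finset.sum_congr rfl fun i hi => ih i (Nat.mem_properDivisors.1 hi).2
      omega

private lemma cycleType_count_mul (σ : Perm β) (d : ℕ) (hd : 2 ≤ d) :
    Multiset.count d σ.cycleType * d = perCnt σ d := by
  classical
  set t : Finset (Perm β) := σ.cycleFactorsFinset.filter (fun c => c.support.card = d) with ht
  have hcount : Multiset.count d σ.cycleType = t.card := by
    rw [cycleType_def, Multiset.count_map]
    have hrfl : t.card
        = Multiset.card (Multiset.filter (fun c => c.support.card = d)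
            σ.cycleFactorsFinset.val) := rfl
    rw [hrfl]
    congr 1
    exact Multiset.filter_congr fun x _ => by
      simp only [Function.comp_apply, eq_comm]
  have hperCnt : perCnt σ d = ∑ c ∈ t, c.support.card := by
    unfold perCnt
    rw [Finset.card_eq_sum_card_fiberwise (f := fun x => σ.cycleOf x) (t := t) ?memb]
    case memb =>
      intro x hx
      have hx' := (Finset.mem_filter.1 hx).2
      have hne : σ x ≠ x := by
        intro hfix
        rw [per, if_pos hfix] at hx'
        omega
      rw [ht, Finset.mem_coe, Finset.mem_filter]
      refine ⟨cycleOf_mem_cycleFactorsFinset_iff.2 (mem_support.2 hne), ?_⟩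
      rw [per, if_neg hne] at hx'
      exact hx'
    refine Finset.sum_congr rfl fun c hc => ?_
    congr 1
    ext x
    simp only [Finset.mem_filter, Finset.mem_univ, true_and]
    constructor
    · rintro ⟨hper, hcyc⟩
      have hne : σ x ≠ x := by
        intro hfix
        rw [per, if_pos hfix] at hper
        omega
      rw [← hcyc]
      exact mem_supp_cycleOf hne
    · intro hx
      have hcfac : c ∈ σ.cycleFactorsFinset := (Finset.mem_filter.1 hc).1
      have hceq : c = σ.cycleOf x := cycle_is_cycleOf hx hcfac
      have hxs : x ∈ σ.support := by
        rw [hceq] at hx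
        exact (mem_support_cycleOf_iff.1 hx).2
      have hne : σ x ≠ x := mem_support.1 hxs
      refine ⟨?_, hceq.symm⟩
      rw [per, if_neg hne, ← hceq]
      exact (Finset.mem_filter.1 hc).2
  rw [hcount, hperCnt]
  rw [Finset.sum_congr rfl (fun c hc => (Finset.mem_filter.1 hc).2)]
  rw [Finset.sum_const, smul_eq_mul]

private lemma cycleType_eq_of_fixCnt {σ σ' : Perm β}
    (h : ∀ k, fixCnt σ k = fixCnt σ' k) : σ.cycleType = σ'.cycleType := by
  ext d
  rcases lt_or_ge d 2 with hd | hd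
  · rw [Multiset.count_eq_zero_of_notMem, Multiset.count_eq_zero_of_notMem]
    · intro hmem; exact absurd (two_le_of_mem_cycleType hmem) (by omega)
    · intro hmem; exact absurd (two_le_of_mem_cycleType hmem) (by omega)
  · have h1 := cycleType_count_mul σ d hd
    have h2 := cycleType_count_mul σ' d hd
    have h3 := perCnt_eq_of_fixCnt h d
    rw [h3, ← h2] at h1
    exact Nat.eq_of_mul_eq_mul_right (by omega) h1

end CycleTypeFix

open Equiv Equiv.Perm Finset

section Exchange

variable {α : Type*}

private lemma neg_rel {a b : Equiv.Perm α} (hab : Commute a b) {x : α}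
    {p q : ℤ} (h : (a ^ p) x = (b ^ q) x) : (a ^ (-p)) x = (b ^ (-q)) x := by
  have h1 : x = (a ^ (-p)) ((b ^ q) x) := by
    rw [← h, ← Equiv.Perm.mul_apply, ← zpow_add]
    simp
  have h2 : (a ^ (-p)) ((b ^ q) x) = (b ^ q) ((a ^ (-p)) x) := by
    rw [← Equiv.Perm.mul_apply, ← Equiv.Perm.mul_apply, (hab.zpow_zpow (-p) q).eq]
  have h3 : x = (b ^ q) ((a ^ (-p)) x) := h1.trans h2
  have h4 := congrArg (fun y => (b ^ (-q)) y) h3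
  simp only [← Equiv.Perm.mul_apply, ← zpow_add] at h4
  rw [← mul_assoc, ← zpow_add, show -q + q = 0 by ring] at h4
  simp only [zpow_zero, one_mul, Equiv.Perm.one_apply] at h4
  exact h4.symm

private lemma iter_rel {a b : Equiv.Perm α} (hab : Commute a b) {x : α}
    {i k : ℤ} (h : (a ^ i) x = (b ^ k) x) :
    ∀ s : ℤ, (a ^ (i * s)) x = (b ^ (k * s)) x := by
  have hnat : ∀ s : ℕ, (a ^ (i * (s : ℤ))) x = (b ^ (k * (s : ℤ))) x := by
    intro s
    induction s with
    | zero => simp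
    | succ t iht =>
      have s1 : (a ^ (i * ((t + 1 : ℕ) : ℤ))) x = (a ^ (i * (t : ℤ))) ((a ^ i) x) := by
        rw [← Equiv.Perm.mul_apply, ← zpow_add]
        congr 2
        push_cast
        ring
      have s2 : (a ^ (i * (t : ℤ))) ((b ^ k) x) = (b ^ k) ((a ^ (i * (t : ℤ))) x) := by
        rw [← Equiv.Perm.mul_apply, ← Equiv.Perm.mul_apply, (hab.zpow_zpow (i * (t:ℤ)) k).eq]
      have s3 : (b ^ k) ((b ^ (k * (t : ℤ))) x) = (b ^ (k * ((t + 1 : ℕ) : ℤ))) x := by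
        rw [← Equiv.Perm.mul_apply, ← zpow_add]
        congr 2
        push_cast
        ring
      rw [s1, h, s2, iht, s3]
  intro s
  rcases le_or_gt 0 s with hs | hs
  · have : s = ((s.toNat : ℕ) : ℤ) := (Int.toNat_of_nonneg hs).symm
    rw [this]
    exact hnat s.toNat
  · have hpos : (0:ℤ) ≤ -s := by omega
    have : -s = (((-s).toNat : ℕ) : ℤ) := (Int.toNat_of_nonneg hpos).symm
    have hres := hnat (-s).toNat
    rw [← this] at hres
    have := neg_rel hab hres
    simpa [mul_neg, neg_neg] using this

private lemma zpow_reduce {p : Equiv.Perm α} {m : ℕ} (hm : 0 < m) (hp : p ^ m = 1) (β : ℤ) :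
    p ^ β = p ^ ((β % (m : ℤ)).toNat) := by
  have hmz : (m : ℤ) ≠ 0 := by exact_mod_cast hm.ne'
  have h0 : (0:ℤ) ≤ β % m := Int.emod_nonneg β hmz
  conv_lhs => rw [show β = (m : ℤ) * (β / m) + β % m from (Int.mul_ediv_add_emod β m).symm]
  rw [zpow_add, zpow_mul]
  have h1 : p ^ (m : ℤ) = 1 := by rw [zpow_natCast, hp]
  rw [h1, one_zpow, one_mul, ← zpow_natCast]
  congr 1
  exact (Int.toNat_of_nonneg h0).symm

private lemma orbit_dvd_int {p : Equiv.Perm α} {m : ℕ} (hm : 0 < m) (hp : p ^ m = 1)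
    {x : α} (hN : ∀ t : ℕ, (p ^ t) x = x → m ∣ t) :
    ∀ β : ℤ, (p ^ β) x = x → (m : ℤ) ∣ β := by
  intro β hβ
  have hmz : (m : ℤ) ≠ 0 := by exact_mod_cast hm.ne'
  rw [zpow_reduce hm hp] at hβ
  have hdvd := hN _ hβ
  have hlt : β % (m:ℤ) < m := Int.emod_lt_of_pos β (by exact_mod_cast hm)
  have h0 : (0:ℤ) ≤ β % m := Int.emod_nonneg β hmz
  have hz : (β % (m:ℤ)).toNat = 0 := by
    by_contra hne
    have := Nat.le_of_dvd (Nat.pos_of_ne_zero hne) hdvd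
    omega
  have : β % (m:ℤ) = 0 := by omega
  exact Int.dvd_of_emod_eq_zero this

private lemma exch {a b : Equiv.Perm α} (hab : Commute a b) {m : ℕ} (hm : 0 < m)
    (ha : a ^ m = 1) {x : α} (hbx : ∀ β : ℤ, (b ^ β) x = x → (m : ℤ) ∣ β)
    {i k : ℤ} (h : (a ^ i) x = (b ^ k) x) : ∃ j : ℤ, (a ^ k) x = (b ^ j) x := by
  have hazmul : ∀ t : ℤ, a ^ ((m : ℤ) * t) = 1 := fun t => by
    rw [zpow_mul, zpow_natCast, ha, one_zpow]
  set d : ℕ := Int.gcd i (m : ℤ) with hd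
  have hd0 : 0 < d := Int.gcd_pos_iff.2 (Or.inr (by exact_mod_cast hm.ne'))
  have hdi : (d : ℤ) ∣ i := Int.gcd_dvd_left i (m : ℤ)
  have hdm : (d : ℤ) ∣ (m : ℤ) := Int.gcd_dvd_right i (m : ℤ)
  obtain ⟨m₁, hm₁⟩ := hdm
  have hdz : (0:ℤ) < (d:ℤ) := by exact_mod_cast hd0
  have hm₁pos : 0 < m₁ := by
    by_contra hneg
    push_neg at hneg
    have h1 : (0:ℤ) < (d:ℤ) * m₁ := by rw [← hm₁]; exact_mod_cast hm
    nlinarith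
  obtain ⟨i₁, hi₁⟩ := hdi
  have hrel := iter_rel hab h m₁
  have hvanish : a ^ (i * m₁) = 1 := by
    have he : i * m₁ = (m : ℤ) * i₁ := by rw [hi₁, hm₁]; ring
    rw [he]; exact hazmul i₁
  have hx1 : (b ^ (k * m₁)) x = x := by
    rw [← hrel, hvanish]; rfl
  have hdvd : (m : ℤ) ∣ k * m₁ := hbx _ hx1
  have hdk : (d : ℤ) ∣ k := by
    obtain ⟨u, hu⟩ := hdvd
    refine ⟨u, ?_⟩
    have he : k * m₁ = (d * u) * m₁ := by rw [hu, hm₁]; ring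
    exact mul_right_cancel₀ hm₁pos.ne' he
  have hbez := Int.gcd_eq_gcd_ab i (m : ℤ)
  obtain ⟨v, hv⟩ := hdk
  set A := Int.gcdA i (m : ℤ) with hA
  set B := Int.gcdB i (m : ℤ) with hB
  have hk_expand : k = i * (A * v) + (m : ℤ) * (B * v) := by
    rw [hv]
    calc (d : ℤ) * v = (i * A + (m:ℤ) * B) * v := by rw [← hbez]
    _ = i * (A * v) + (m : ℤ) * (B * v) := by ring
  have final1 : (a ^ k) x = (a ^ (i * (A * v))) x := by
    conv_lhs => rw [hk_expand]
    rw [zpow_add, Equiv.Perm.mul_apply, hazmul (B * v)]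
    rfl
  have final2 := iter_rel hab h (A * v)
  exact ⟨k * (A * v), by rw [final1, final2]⟩

end Exchange

open Equiv Equiv.Perm Finset

section Blocks

variable {m n : ℕ}

private lemma powApply (hm : 0 < m) (π : Perm (Fin (m * n)))
    (hπ : ∀ x : Fin (m * n), ((π x : ℕ)) = m * ((x : ℕ) / m) + (((x : ℕ) % m + 1) % m)) :
    ∀ (k : ℕ) (x : Fin (m * n)),
      (((π ^ k) x : ℕ)) = m * ((x : ℕ) / m) + (((x : ℕ) % m + k) % m) := by
  intro k
  induction k with
  | zero =>
    intro x
    have h1 : ((x : ℕ) % m + 0) % m = (x : ℕ) % m := by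
      rw [Nat.add_zero]
      exact Nat.mod_mod_of_dvd _ dvd_rfl
    rw [pow_zero]
    have h2 := Nat.div_add_mod (x : ℕ) m
    simp only [Equiv.Perm.one_apply]
    omega
  | succ t iht =>
    intro x
    have hy := iht x
    set y := (π ^ t) x with hy'
    have hltm : ((x : ℕ) % m + t) % m < m := Nat.mod_lt _ hm
    have hdiv : (y : ℕ) / m = (x : ℕ) / m := by
      rw [hy, Nat.mul_add_div hm, Nat.div_eq_of_lt hltm, Nat.add_zero]
    have hmod : (y : ℕ) % m = ((x : ℕ) % m + t) % m := by
      rw [hy, Nat.mul_add_mod, Nat.mod_mod_of_dvd _ dvd_rfl]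
    have happ : (π ^ (t + 1)) x = π y := by
      rw [pow_succ', Equiv.Perm.mul_apply]
    rw [happ, hπ y, hdiv, hmod, Nat.mod_add_mod, Nat.add_assoc]

private lemma blkinv (hm : 0 < m) (π : Perm (Fin (m * n)))
    (hπ : ∀ x : Fin (m * n), ((π x : ℕ)) = m * ((x : ℕ) / m) + (((x : ℕ) % m + 1) % m)) :
    ∀ (k : ℕ) (x : Fin (m * n)), (((π ^ k) x : ℕ)) / m = (x : ℕ) / m := by
  intro k x
  rw [powApply hm π hπ k x, Nat.mul_add_div hm,
    Nat.div_eq_of_lt (Nat.mod_lt _ hm), Nat.add_zero]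

private lemma pi_pow_m (hm : 0 < m) (π : Perm (Fin (m * n)))
    (hπ : ∀ x : Fin (m * n), ((π x : ℕ)) = m * ((x : ℕ) / m) + (((x : ℕ) % m + 1) % m)) :
    π ^ m = 1 := by
  ext x
  rw [powApply hm π hπ m x]
  have h1 : ((x : ℕ) % m + m) % m = (x : ℕ) % m := by
    rw [Nat.add_mod_right]
    exact Nat.mod_mod_of_dvd _ dvd_rfl
  have h2 := Nat.div_add_mod (x : ℕ) m
  simp only [Equiv.Perm.one_apply]
  omega

private lemma orbitN (hm : 0 < m) (π : Perm (Fin (m * n)))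
    (hπ : ∀ x : Fin (m * n), ((π x : ℕ)) = m * ((x : ℕ) / m) + (((x : ℕ) % m + 1) % m)) :
    ∀ (x : Fin (m * n)) (k : ℕ), (π ^ k) x = x → m ∣ k := by
  intro x k hk
  have h1 := powApply hm π hπ k x
  rw [hk] at h1
  have h2 := Nat.div_add_mod (x : ℕ) m
  have h3 : ((x : ℕ) % m + k) % m = (x : ℕ) % m := by omega
  have h4 : ((x : ℕ) % m + k) % m = ((x : ℕ) % m + 0) % m := by
    rw [h3, Nat.add_zero]
    exact (Nat.mod_mod_of_dvd _ dvd_rfl).symm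
  have h5 : k ≡ 0 [MOD m] := Nat.ModEq.add_left_cancel' _ h4
  exact (Nat.modEq_zero_iff_dvd).1 h5

private lemma sameblk (hm : 0 < m) (π : Perm (Fin (m * n)))
    (hπ : ∀ x : Fin (m * n), ((π x : ℕ)) = m * ((x : ℕ) / m) + (((x : ℕ) % m + 1) % m)) :
    ∀ x y : Fin (m * n), (x : ℕ) / m = (y : ℕ) / m → ∃ k : ℕ, (π ^ k) x = y := by
  intro x y hxy
  refine ⟨(m + (y : ℕ) % m - (x : ℕ) % m) % m, ?_⟩
  have hxm : (x : ℕ) % m < m := Nat.mod_lt _ hm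
  have e1 : ((x : ℕ) % m + (m + (y : ℕ) % m - (x : ℕ) % m) % m) % m
      = ((x : ℕ) % m + (m + (y : ℕ) % m - (x : ℕ) % m)) % m := Nat.add_mod_mod _ _ _
  have e2 : (x : ℕ) % m + (m + (y : ℕ) % m - (x : ℕ) % m) = m + (y : ℕ) % m := by omega
  have e3 : (m + (y : ℕ) % m) % m = (y : ℕ) % m := by
    rw [Nat.add_mod_left]
    exact Nat.mod_mod_of_dvd _ dvd_rfl
  apply Fin.ext
  rw [powApply hm π hπ _ x, e1, e2, e3, hxy]
  exact Nat.div_add_mod (y : ℕ) m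

end Blocks

section Main

private theorem blocks_conj {m n : ℕ} (hm : 0 < m)
    (π : Equiv.Perm (Fin (m * n)))
    (hπ : ∀ x : Fin (m * n), ((π x : ℕ)) = m * ((x : ℕ) / m) + (((x : ℕ) % m + 1) % m))
    (g : Equiv.Perm (Fin (m * n)))
    (hcomm : Commute (g * π * g⁻¹) π) :
    ∃ τ τ' : Equiv.Perm (Fin n),
      (∀ (x : Fin (m * n)) (j : Fin n), (x : ℕ) / m = (j : ℕ) →
        (((g * π * g⁻¹) x : ℕ)) / m = ((τ j : ℕ))) ∧
      (∀ (x : Fin (m * n)) (j : Fin n), (x : ℕ) / m = (j : ℕ) →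
        (((g⁻¹ * π * g) x : ℕ)) / m = ((τ' j : ℕ))) ∧
      IsConj τ τ' := by
  classical
  have hc'eq : (g⁻¹ * π * g) * π = π * (g⁻¹ * π * g) := by
    have h := hcomm.eq
    calc (g⁻¹ * π * g) * π = g⁻¹ * (π * (g * π * g⁻¹)) * g := by group
      _ = g⁻¹ * (g * π * g⁻¹ * π) * g := by rw [← h]
      _ = π * (g⁻¹ * π * g) := by group
  set c : Perm (Fin (m * n)) := g * π * g⁻¹ with hcdef
  set c' : Perm (Fin (m * n)) := g⁻¹ * π * g with hc'def
  have hc : Commute c π := hcomm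
  have hc' : Commute c' π := hc'eq
  have hpinv := blkinv hm π hπ
  have hpm := pi_pow_m hm π hπ
  have horbN := orbitN hm π hπ
  have hsb := sameblk hm π hπ
  have hblt : ∀ x : Fin (m * n), (x : ℕ) / m < n := fun x =>
    (Nat.div_lt_iff_lt_mul hm).2 (lt_of_lt_of_eq x.2 (mul_comm m n))
  set blkF : Fin (m * n) → Fin n := fun x => ⟨(x : ℕ) / m, hblt x⟩ with hblkF
  have hinv2 : ∀ e : Perm (Fin (m * n)), Commute e π → ∀ x y : Fin (m * n),
      (x : ℕ) / m = (y : ℕ) / m → ((e x : ℕ)) / m = ((e y : ℕ)) / m := by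
    intro e he x y hxy
    obtain ⟨k, hk⟩ := hsb x y hxy
    rw [← hk]
    have hswap : e ((π ^ k) x) = (π ^ k) (e x) := by
      rw [← Equiv.Perm.mul_apply, ← Equiv.Perm.mul_apply, (he.pow_right k).eq]
    rw [hswap, hpinv]
  have mk : ∀ e : Perm (Fin (m * n)), Commute e π →
      ∃ τ : Perm (Fin n), ∀ x, blkF (e x) = τ (blkF x) := by
    intro e he
    have heinv : Commute e⁻¹ π := he.inv_left
    have hrepex : ∀ j : Fin n, ∃ x : Fin (m * n), blkF x = j := by
      intro j
      refine ⟨⟨m * (j : ℕ), mul_lt_mul_of_pos_left j.2 hm⟩, ?_⟩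
      apply Fin.ext
      show (m * (j : ℕ)) / m = (j : ℕ)
      exact Nat.mul_div_cancel_left _ hm
    choose rep hrep using hrepex
    set F : Fin n → Fin n := fun j => blkF (e (rep j)) with hF
    set Finv : Fin n → Fin n := fun j => blkF (e⁻¹ (rep j)) with hFinv
    have hkey : ∀ (e' : Perm (Fin (m * n))), Commute e' π →
        ∀ x, blkF (e' x) = blkF (e' (rep (blkF x))) := by
      intro e' he' x
      apply Fin.ext
      show ((e' x : ℕ)) / m = ((e' (rep (blkF x)) : ℕ)) / m
      apply hinv2 e' he'
      have h5 : ((rep (blkF x) : Fin (m * n)) : ℕ) / m = (x : ℕ) / m :=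
        congrArg Fin.val (hrep (blkF x))
      exact h5.symm
    have hkeyF : ∀ x, blkF (e x) = F (blkF x) := fun x => hkey e he x
    have hkeyFinv : ∀ x, blkF (e⁻¹ x) = Finv (blkF x) := fun x => hkey e⁻¹ heinv x
    have h2 : ∀ j, Finv (F j) = j := by
      intro j
      have h3 := hkeyFinv (e (rep j))
      rw [(Equiv.Perm.inv_eq_iff_eq.2 rfl : e⁻¹ (e (rep j)) = rep j), hrep j] at h3
      exact h3.symm
    have hFinj : Function.Injective F := by
      intro a b hab
      rw [← h2 a, hab, h2 b]
    set τ : Perm (Fin n) := Equiv.ofBijective F (Finite.injective_iff_bijective.1 hFinj)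
      with hτdef
    refine ⟨τ, fun x => ?_⟩
    rw [hkeyF x]
    rfl
  obtain ⟨τ, hτ⟩ := mk c hc
  obtain ⟨τ', hτ'⟩ := mk c' hc'
  refine ⟨τ, τ', ?_, ?_, ?_⟩
  · intro x j hxj
    have hbx : blkF x = j := Fin.ext hxj
    have h1 := hτ x
    rw [hbx] at h1
    exact congrArg Fin.val h1
  · intro x j hxj
    have hbx : blkF x = j := Fin.ext hxj
    have h1 := hτ' x
    rw [hbx] at h1
    exact congrArg Fin.val h1
  · apply Equiv.Perm.isConj_of_cycleType_eq
    apply cycleType_eq_of_fixCnt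
    intro k
    have hτpow : ∀ (e : Perm (Fin (m * n))) (σ : Perm (Fin n)),
        (∀ x, blkF (e x) = σ (blkF x)) →
        ∀ (t : ℕ) (x), blkF ((e ^ t) x) = (σ ^ t) (blkF x) := by
      intro e σ hk t
      induction t with
      | zero => intro x; simp
      | succ u ihu =>
        intro x
        rw [pow_succ', pow_succ', Equiv.Perm.mul_apply, Equiv.Perm.mul_apply, hk, ihu]
    have hcm : c ^ m = 1 := by
      rw [hcdef, conj_pow, hpm]
      simp
    have hginv : c' = g⁻¹ * π * (g⁻¹)⁻¹ := by rw [inv_inv]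
    have hc'm : c' ^ m = 1 := by
      rw [hginv, conj_pow, hpm]
      simp
    have horbZ : ∀ (x : Fin (m * n)) (β : ℤ), (π ^ β) x = x → (m : ℤ) ∣ β :=
      fun x => orbit_dvd_int hm hpm (horbN x)
    have horbZc : ∀ (x : Fin (m * n)) (β : ℤ), (c ^ β) x = x → (m : ℤ) ∣ β := by
      intro x β hβ
      apply horbZ (g⁻¹ x) β
      have hcz : c ^ β = g * π ^ β * g⁻¹ := by rw [hcdef, conj_zpow]
      rw [hcz] at hβ
      simp only [Equiv.Perm.mul_apply] at hβ
      have h4 := congrArg (fun y => g⁻¹ y) hβ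
      simpa using h4
    have horbZc' : ∀ (x : Fin (m * n)) (β : ℤ), (c' ^ β) x = x → (m : ℤ) ∣ β := by
      intro x β hβ
      apply horbZ (g x) β
      have hcz : c' ^ β = g⁻¹ * π ^ β * g := by
        rw [hginv, conj_zpow, inv_inv]
      rw [hcz] at hβ
      simp only [Equiv.Perm.mul_apply] at hβ
      have h4 := congrArg (fun y => g y) hβ
      simpa using h4
    have hπc : Commute π c := hc.symm
    have hπc' : Commute π c' := hc'.symm
    have hczk : c ^ (k : ℤ) = g * π ^ (k : ℤ) * g⁻¹ := by rw [hcdef, conj_zpow]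
    have hc'zk : c' ^ (k : ℤ) = g⁻¹ * π ^ (k : ℤ) * g := by rw [hginv, conj_zpow, inv_inv]
    have hpoint : ∀ x : Fin (m * n),
        (∃ i : ℕ, (c ^ k) x = (π ^ i) x) ↔
        (∃ i : ℕ, (c' ^ k) (g⁻¹ x) = (π ^ i) (g⁻¹ x)) := by
      intro x
      constructor
      · rintro ⟨i, hi⟩
        have hi' : (π ^ (i : ℤ)) x = (c ^ (k : ℤ)) x := by
          rw [zpow_natCast, zpow_natCast]
          exact hi.symm
        obtain ⟨j, hj⟩ := exch hπc hm hpm (horbZc x) hi'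
        have hcj : c ^ j = g * π ^ j * g⁻¹ := by rw [hcdef, conj_zpow]
        rw [hcj] at hj
        simp only [Equiv.Perm.mul_apply] at hj
        have h2 : (g⁻¹ : Perm (Fin (m * n))) ((π ^ (k : ℤ)) x) = (π ^ j) (g⁻¹ x) := by
          rw [hj]
          simp
        have h3 : (c' ^ (k : ℤ)) (g⁻¹ x) = (g⁻¹ : Perm (Fin (m * n))) ((π ^ (k : ℤ)) x) := by
          rw [hc'zk]
          simp [Equiv.Perm.mul_apply]
        have h4 : (c' ^ (k : ℤ)) (g⁻¹ x) = (π ^ j) (g⁻¹ x) := h3.trans h2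
        rw [zpow_reduce hm hpm j, zpow_natCast] at h4
        exact ⟨_, h4⟩
      · rintro ⟨i, hi⟩
        have hi' : (π ^ (i : ℤ)) (g⁻¹ x) = (c' ^ (k : ℤ)) (g⁻¹ x) := by
          rw [zpow_natCast, zpow_natCast]
          exact hi.symm
        obtain ⟨j, hj⟩ := exch hπc' hm hpm (horbZc' (g⁻¹ x)) hi'
        have hcj : c' ^ j = g⁻¹ * π ^ j * g := by rw [hginv, conj_zpow, inv_inv]
        rw [hcj] at hj
        simp only [Equiv.Perm.mul_apply, (Equiv.Perm.eq_inv_iff_eq.1 rfl : g (g⁻¹ x) = x)] at hj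
        have h2 : (g : Perm (Fin (m * n))) ((π ^ (k : ℤ)) (g⁻¹ x)) = (π ^ j) x := by
          rw [hj]
          simp
        have h3 : (c ^ (k : ℤ)) x = (g : Perm (Fin (m * n))) ((π ^ (k : ℤ)) (g⁻¹ x)) := by
          rw [hczk]
          simp [Equiv.Perm.mul_apply]
        have h4 : (c ^ (k : ℤ)) x = (π ^ j) x := h3.trans h2
        rw [zpow_reduce hm hpm j, zpow_natCast] at h4
        exact ⟨_, h4⟩
    have hchar : ∀ (e : Perm (Fin (m * n))) (σ : Perm (Fin n)),
        (∀ x, blkF (e x) = σ (blkF x)) →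
        ∀ x, ((σ ^ k) (blkF x) = blkF x ↔ ∃ i : ℕ, (e ^ k) x = (π ^ i) x) := by
      intro e σ hk x
      constructor
      · intro hfix
        have h1 : blkF ((e ^ k) x) = blkF x := by rw [hτpow e σ hk k x, hfix]
        have h2 : (((e ^ k) x : ℕ)) / m = (x : ℕ) / m := congrArg Fin.val h1
        obtain ⟨i, hi⟩ := hsb x ((e ^ k) x) h2.symm
        exact ⟨i, hi.symm⟩
      · rintro ⟨i, hi⟩
        have h1 : blkF ((e ^ k) x) = blkF x := by
          rw [hi]
          apply Fin.ext
          exact hpinv i x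
        rw [hτpow e σ hk k x] at h1
        exact h1
    have hfiber : ∀ j : Fin n, (univ.filter fun x : Fin (m * n) => blkF x = j).card = m := by
      intro j
      have hbij : (univ.filter fun x : Fin (m * n) => blkF x = j).card
          = (Finset.range m).card := by
        apply Finset.card_bij (i := fun (x : Fin (m * n)) (_ : x ∈ univ.filter
        fun x : Fin (m * n) => blkF x = j) => (x : ℕ) % m)
        · intro a _
          exact Finset.mem_range.2 (Nat.mod_lt _ hm)
        · intro a ha b hb hab
          simp only [Finset.mem_filter, Finset.mem_univ, true_and] at ha hb
          have ha' : (a : ℕ) / m = (j : ℕ) := congrArg Fin.val ha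
          have hb' : (b : ℕ) / m = (j : ℕ) := congrArg Fin.val hb
          have h2 := Nat.div_add_mod (a : ℕ) m
          have h3 := Nat.div_add_mod (b : ℕ) m
          apply Fin.ext
          rw [← h2, ← h3, ha', hb', hab]
        · intro t ht
          have htm : t < m := Finset.mem_range.1 ht
          have hbound : m * (j : ℕ) + t < m * n := by
            have h1 : m * ((j : ℕ) + 1) ≤ m * n :=
              Nat.mul_le_mul le_rfl (by omega : (j : ℕ) + 1 ≤ n)
            have h2 : m * ((j : ℕ) + 1) = m * (j : ℕ) + m := by ring
            omega
          refine ⟨⟨m * (j : ℕ) + t, hbound⟩, ?_, ?_⟩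
          · simp only [Finset.mem_filter, Finset.mem_univ, true_and]
            apply Fin.ext
            show (m * (j : ℕ) + t) / m = (j : ℕ)
            rw [Nat.mul_add_div hm, Nat.div_eq_of_lt htm, Nat.add_zero]
          · show (m * (j : ℕ) + t) % m = t
            rw [Nat.mul_add_mod]
            exact Nat.mod_eq_of_lt htm
      rw [Finset.card_range] at hbij
      exact hbij
    have hcard : ∀ (P : Fin n → Prop) (i1 : DecidablePred P)
        (i2 : DecidablePred fun x : Fin (m * n) => P (blkF x)),
        (@Finset.filter _ _ i2 univ).card = m * (@Finset.filter _ _ i1 univ).card := by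
      intro P i1 i2
      rw [Finset.card_eq_sum_card_fiberwise (f := blkF) (t := univ.filter P)
        (fun x hx => by
          simp only [Finset.mem_coe, Finset.mem_filter, Finset.mem_univ, true_and] at hx ⊢
          exact hx)]
      have hful : ∀ j ∈ univ.filter P,
          ((univ.filter fun x : Fin (m * n) => P (blkF x)).filter fun x => blkF x = j)
            = univ.filter fun x : Fin (m * n) => blkF x = j := by
        intro j hj
        ext x
        simp only [Finset.mem_filter, Finset.mem_univ, true_and] at hj ⊢
        constructor
        · rintro ⟨_, h2⟩
          exact h2
        · intro h2
          exact ⟨h2 ▸ hj, h2⟩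
      calc ∑ j ∈ univ.filter P,
            ((univ.filter fun x : Fin (m * n) => P (blkF x)).filter fun x => blkF x = j).card
          = ∑ j ∈ univ.filter P, m :=
            Finset.sum_congr rfl fun j hj => by rw [hful j hj, hfiber j]
        _ = m * (univ.filter P).card := by rw [Finset.sum_const, smul_eq_mul, mul_comm]
    have hreidx : (univ.filter fun x : Fin (m * n) =>
          ∃ i : ℕ, (c' ^ k) (g⁻¹ x) = (π ^ i) (g⁻¹ x)).card
        = (univ.filter fun y : Fin (m * n) => ∃ i : ℕ, (c' ^ k) y = (π ^ i) y).card := by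
      apply Finset.card_bij (i := fun (x : Fin (m * n)) (_ : x ∈ univ.filter
        fun x : Fin (m * n) => ∃ i : ℕ, (c' ^ k) (g⁻¹ x) = (π ^ i) (g⁻¹ x)) => g⁻¹ x)
      · intro a ha
        simp only [Finset.mem_filter, Finset.mem_univ, true_and] at ha ⊢
        exact ha
      · intro a _ b _ hab
        exact (Equiv.injective _) hab
      · intro b hb
        simp only [Finset.mem_filter, Finset.mem_univ, true_and] at hb
        refine ⟨g b, ?_, ?_⟩
        · simp only [Finset.mem_filter, Finset.mem_univ, true_and,
            (Equiv.Perm.inv_eq_iff_eq.2 rfl : g⁻¹ (g b) = b)]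
          exact hb
        · simp
    have stepA : (univ.filter fun x : Fin (m * n) => (τ ^ k) (blkF x) = blkF x)
        = univ.filter fun x : Fin (m * n) => ∃ i : ℕ, (c ^ k) x = (π ^ i) x :=
      Finset.filter_congr fun x _ => hchar c τ hτ x
    have stepA' : (univ.filter fun x : Fin (m * n) => (τ' ^ k) (blkF x) = blkF x)
        = univ.filter fun x : Fin (m * n) => ∃ i : ℕ, (c' ^ k) x = (π ^ i) x :=
      Finset.filter_congr fun x _ => hchar c' τ' hτ' x
    have stepB : (univ.filter fun x : Fin (m * n) => ∃ i : ℕ, (c ^ k) x = (π ^ i) x)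
        = univ.filter fun x : Fin (m * n) => ∃ i : ℕ, (c' ^ k) (g⁻¹ x) = (π ^ i) (g⁻¹ x) :=
      Finset.filter_congr fun x _ => hpoint x
    have step1 : (univ.filter fun x : Fin (m * n) => (τ ^ k) (blkF x) = blkF x).card
        = m * (univ.filter fun j : Fin n => (τ ^ k) j = j).card := hcard (fun j => (τ ^ k) j = j) _ _
    have step1' : (univ.filter fun x : Fin (m * n) => (τ' ^ k) (blkF x) = blkF x).card
        = m * (univ.filter fun j : Fin n => (τ' ^ k) j = j).card := hcard (fun j => (τ' ^ k) j = j) _ _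
    have e1 : fixCnt τ k = (univ.filter fun j : Fin n => (τ ^ k) j = j).card :=
      fixCnt_eq_card τ k _
    have e1' : fixCnt τ' k = (univ.filter fun j : Fin n => (τ' ^ k) j = j).card :=
      fixCnt_eq_card τ' k _
    have hmulfix : m * fixCnt τ k = m * fixCnt τ' k := by
      rw [e1, e1', ← step1, ← step1']
      rw [stepA, stepB, hreidx, ← stepA']
    exact Nat.eq_of_mul_eq_mul_left hm hmulfix

end Main

/-- Let `r ≥ 2`, `n ≥ 2`.  In `S_{2rn}` (on `Fin (2*r*n)`,
`0`-indexed), for `0 ≤ j < n` let `A j` be the `2r`-cycle on the `j`-th block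
`𝔸_j = {2rj, …, 2rj + 2r - 1}` and let `π = A_0 ⋯ A_{n-1}`.  Every element of the
centralizer of `π` permutes the blocks `𝔸_0, …, 𝔸_{n-1}`; the induced permutation
`τ_x ∈ S_n` is determined by the condition that `x` maps block `j` onto block
`τ_x j`.  Let `g ∈ S_{2rn}` be such that `g π g⁻¹` commutes with `π`.  Then both
`g π g⁻¹` and `g⁻¹ π g` lie in the centralizer of `π`, and the induced permutations
`τ_{g π g⁻¹}` and `τ_{g⁻¹ π g}` of the blocks are conjugate in `S_n`
(equivalently, they have the same cycle type). -/
theorem stmt9 (r n : ℕ) (hr : 2 ≤ r) (hn : 2 ≤ n)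
    (A : ℕ → Equiv.Perm (Fin (2 * r * n)))
    (hA : ∀ j < n, ∀ x : Fin (2 * r * n),
      ((A j x : ℕ)) = if (x : ℕ) / (2 * r) = j
        then 2 * r * j + ((x : ℕ) % (2 * r) + 1) % (2 * r) else (x : ℕ))
    (π : Equiv.Perm (Fin (2 * r * n)))
    (hπ : ∀ x : Fin (2 * r * n),
      ((π x : ℕ)) = 2 * r * ((x : ℕ) / (2 * r)) + ((x : ℕ) % (2 * r) + 1) % (2 * r))
    (g : Equiv.Perm (Fin (2 * r * n)))
    (hcomm : Commute (g * π * g⁻¹) π) :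
    g * π * g⁻¹ ∈ Subgroup.centralizer {π} ∧
    g⁻¹ * π * g ∈ Subgroup.centralizer {π} ∧
    ∃ τ τ' : Equiv.Perm (Fin n),
      (∀ (x : Fin (2 * r * n)) (j : Fin n), (x : ℕ) / (2 * r) = (j : ℕ) →
        (((g * π * g⁻¹) x : ℕ)) / (2 * r) = ((τ j : ℕ))) ∧
      (∀ (x : Fin (2 * r * n)) (j : Fin n), (x : ℕ) / (2 * r) = (j : ℕ) →
        (((g⁻¹ * π * g) x : ℕ)) / (2 * r) = ((τ' j : ℕ))) ∧
      IsConj τ τ' := by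
  have hm : 0 < 2 * r := by omega
  have hc' : (g⁻¹ * π * g) * π = π * (g⁻¹ * π * g) := by
    have h := hcomm.eq
    calc (g⁻¹ * π * g) * π = g⁻¹ * (π * (g * π * g⁻¹)) * g := by group
      _ = g⁻¹ * (g * π * g⁻¹ * π) * g := by rw [← h]
      _ = π * (g⁻¹ * π * g) := by group
  refine ⟨?_, ?_, ?_⟩
  · rw [Subgroup.mem_centralizer_iff]
    intro h hh
    rw [Set.mem_singleton_iff] at hh
    subst hh
    exact hcomm.eq.symm
  · rw [Subgroup.mem_centralizer_iff]
    intro h hh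
    rw [Set.mem_singleton_iff] at hh
    subst hh
    exact hc'.symm
  · exact blocks_conj hm π hπ g hcomm
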